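/- arXiv:0902.1792 — 3 statements merged into one kernel-verified Lean document; each statement's English description precedes it below -/
import Mathlib

section
/- For every λ > 0 there exist a constant C > 0 and an integer M_0 such that for all M ≥ M_0, if X_1, ..., X_M are independent identically distributed Poisson random variables with mean λ, then E[max_{1≤i≤M} X_i] ≤ C·log M / log log M. -/
open MeasureTheory ProbabilityTheory
open scoped ENNReal


lemma poisson_series_bound (lam : ℝ) (hlam : 0 < lam) (K : ℕ) :
    Summable (fun k : ℕ => ((k - K : ℕ) : ℝ) * (Real.exp (-lam) * lam ^ k / (Nat.factorial k))) ∧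
    ∑' k : ℕ, ((k - K : ℕ) : ℝ) * (Real.exp (-lam) * lam ^ k / (Nat.factorial k))
      ≤ lam ^ (K + 1) / (Nat.factorial K) := by
  set p : ℕ → ℝ := fun k => Real.exp (-lam) * lam ^ k / (Nat.factorial k) with hp
  set f : ℕ → ℝ := fun k => ((k - K : ℕ) : ℝ) * p k with hf
  set B : ℕ → ℝ := fun j =>
    (Real.exp (-lam) * lam ^ (K + 1) / (Nat.factorial K)) * (lam ^ j / (Nat.factorial j)) with hB
  have hfnn : ∀ k, 0 ≤ f k := by
    intro k
    have : 0 ≤ p k := by positivity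
    positivity
  have hg_le : ∀ j : ℕ, f (j + (K + 1)) ≤ B j := by
    intro j
    have hnat : (j + 1) * (Nat.factorial K * Nat.factorial j) ≤ Nat.factorial (j + (K + 1)) := by
      have h1 : Nat.factorial K * Nat.factorial (j + 1) ∣ Nat.factorial (K + (j + 1)) :=
        Nat.factorial_mul_factorial_dvd_factorial_add K (j + 1)
      have h2 := Nat.le_of_dvd (Nat.factorial_pos _) h1
      calc (j + 1) * (Nat.factorial K * Nat.factorial j)
          = Nat.factorial K * ((j + 1) * Nat.factorial j) := by ring
        _ = Nat.factorial K * Nat.factorial (j + 1) := by rw [Nat.factorial_succ]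
        _ ≤ Nat.factorial (K + (j + 1)) := h2
        _ = Nat.factorial (j + (K + 1)) := by rw [show K + (j + 1) = j + (K + 1) by omega]
    have hc : ((j : ℝ) + 1) / (Nat.factorial (j + (K + 1)) : ℝ)
        ≤ 1 / ((Nat.factorial K : ℝ) * (Nat.factorial j : ℝ)) := by
      rw [div_le_div_iff₀ (by positivity) (by positivity), one_mul]
      calc ((j : ℝ) + 1) * ((Nat.factorial K : ℝ) * (Nat.factorial j : ℝ))
          = (((j + 1) * (Nat.factorial K * Nat.factorial j) : ℕ) : ℝ) := by push_cast; ring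
        _ ≤ ((Nat.factorial (j + (K + 1)) : ℕ) : ℝ) := by exact_mod_cast hnat
    have hL : f (j + (K + 1))
        = Real.exp (-lam) * lam ^ (j + (K + 1)) *
          (((j : ℝ) + 1) / (Nat.factorial (j + (K + 1)) : ℝ)) := by
      simp only [hf, hp, show j + (K + 1) - K = j + 1 from by omega]
      push_cast
      ring
    have hR : B j = Real.exp (-lam) * lam ^ (j + (K + 1)) *
        (1 / ((Nat.factorial K : ℝ) * (Nat.factorial j : ℝ))) := by
      simp only [hB]
      rw [show j + (K + 1) = (K + 1) + j from by omega, pow_add]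
      ring
    rw [hL, hR]
    exact mul_le_mul_of_nonneg_left hc (by positivity)
  have hBsum : Summable B := (Real.summable_pow_div_factorial lam).mul_left _
  have hgsum : Summable (fun j => f (j + (K + 1))) :=
    Summable.of_nonneg_of_le (fun j => hfnn _) hg_le hBsum
  have hfsum : Summable f := (summable_nat_add_iff (K + 1)).mp hgsum
  refine ⟨hfsum, ?_⟩
  have hsplit := hfsum.sum_add_tsum_nat_add (K + 1)
  have hzero : ∑ i ∈ Finset.range (K + 1), f i = 0 := by
    apply Finset.sum_eq_zero
    intro i hi
    simp only [Finset.mem_range] at hi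
    simp [hf, show i - K = 0 from by omega]
  have hexp : ∑' j : ℕ, lam ^ j / (Nat.factorial j : ℝ) = Real.exp lam := by
    rw [Real.exp_eq_exp_ℝ, NormedSpace.exp_eq_tsum_div]
  have hBtsum : ∑' j, B j = lam ^ (K + 1) / (Nat.factorial K : ℝ) := by
    rw [hB, tsum_mul_left, hexp, Real.exp_neg]
    field_simp
  calc ∑' k, f k = ∑ i ∈ Finset.range (K + 1), f i + ∑' j, f (j + (K + 1)) := hsplit.symm
    _ = ∑' j, f (j + (K + 1)) := by rw [hzero, zero_add]
    _ ≤ ∑' j, B j := Summable.tsum_le_tsum hg_le hgsum hBsum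
    _ = lam ^ (K + 1) / (Nat.factorial K : ℝ) := hBtsum


lemma poisson_arith (lam : ℝ) (hlam : 0 < lam) (M : ℕ)
    (h : 12 + 8 * |Real.log lam| ≤ Real.log (Real.log M)) :
    (⌈2 * Real.log M / Real.log (Real.log M)⌉₊ : ℝ)
      + (M : ℝ) * (lam ^ (⌈2 * Real.log M / Real.log (Real.log M)⌉₊ + 1)
        / (Nat.factorial ⌈2 * Real.log M / Real.log (Real.log M)⌉₊))
      ≤ 5 * Real.log M / Real.log (Real.log M) := by
  have habs : 0 ≤ |Real.log lam| := abs_nonneg _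
  set L : ℝ := Real.log M with hLdef
  set ℓ : ℝ := Real.log L with hℓdef
  set K : ℕ := ⌈2 * L / ℓ⌉₊ with hKdef
  set r : ℝ := (K : ℝ) with hrdef
  have hℓ12 : 12 ≤ ℓ := by linarith
  have hL0 : 0 ≤ L := Real.log_natCast_nonneg M
  have hL1 : 1 < L := by
    by_contra h'
    push_neg at h'
    have := Real.log_nonpos hL0 h'
    rw [← hℓdef] at this
    linarith
  have hℓpos : (0:ℝ) < ℓ := by linarith
  have hℓL : ℓ < L := lt_of_le_of_lt (Real.log_le_sub_one_of_pos (by linarith)) (by linarith)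
  have hdiv1 : 1 ≤ L / ℓ := (one_le_div hℓpos).mpr hℓL.le
  have hr1 : 2 * L / ℓ ≤ r := Nat.le_ceil _
  have hr2 : r ≤ 2 * L / ℓ + 1 := le_of_lt (Nat.ceil_lt_add_one (by positivity))
  have hmd : 2 * L / ℓ = 2 * (L / ℓ) := by ring
  have h2r : 2 ≤ r := by rw [hmd] at hr1; linarith
  have hrpos : (0:ℝ) < r := by linarith
  have hM1 : (1:ℝ) < (M : ℝ) := by
    by_contra h'
    push_neg at h'
    have := Real.log_nonpos (Nat.cast_nonneg M) h'
    rw [← hLdef] at this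
    linarith
  have hlogr : ℓ - Real.log ℓ ≤ Real.log r := by
    have hle : L / ℓ ≤ r := by rw [hmd] at hr1; nlinarith
    have h1 : Real.log (L / ℓ) ≤ Real.log r := Real.log_le_log (by positivity) hle
    rw [Real.log_div (by linarith) (ne_of_gt hℓpos)] at h1
    rw [← hℓdef] at h1
    linarith
  have hlogℓ : Real.log ℓ ≤ ℓ / 4 + 2 := by
    have h1 : Real.log (ℓ / 4) ≤ ℓ / 4 - 1 := Real.log_le_sub_one_of_pos (by linarith)
    have h2 : Real.log 4 ≤ 3 := by
      have := Real.log_le_sub_one_of_pos (x := 4) (by norm_num)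
      linarith
    have h3 : Real.log ℓ = Real.log (ℓ / 4) + Real.log 4 := by
      rw [← Real.log_mul (by positivity) (by norm_num)]
      norm_num
    linarith
  have key : L + (r + 1) * Real.log lam + r ≤ r * Real.log r := by
    have e1 : (r + 1) * Real.log lam ≤ 2 * r * |Real.log lam| := by
      nlinarith [le_abs_self (Real.log lam)]
    have e2 : 3 * ℓ / 4 - 2 ≤ Real.log r := by linarith
    have e3 : L + 2 * r * |Real.log lam| + r ≤ r * (3 * ℓ / 4 - 2) := by
      have hLeq : 2 * L / ℓ * (ℓ / 2) = L := by field_simp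
      nlinarith [mul_le_mul_of_nonneg_right hr1 (le_of_lt (by linarith : (0:ℝ) < ℓ / 2))]
    have e4 : r * (3 * ℓ / 4 - 2) ≤ r * Real.log r :=
      mul_le_mul_of_nonneg_left e2 (le_of_lt hrpos)
    linarith
  have step2 : (M : ℝ) * lam ^ (K + 1) * Real.exp r ≤ r ^ K := by
    have hlhs_pos : 0 < (M : ℝ) * lam ^ (K + 1) * Real.exp r := by positivity
    have hrhs_pos : 0 < r ^ K := by positivity
    apply (Real.log_le_log_iff hlhs_pos hrhs_pos).mp
    rw [Real.log_mul (by positivity) (by positivity),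
      Real.log_mul (by positivity) (by positivity), Real.log_exp, Real.log_pow, Real.log_pow]
    push_cast
    rw [← hLdef]
    linarith [key]
  have step3 : r ^ K ≤ Real.exp r * (Nat.factorial K : ℝ) := by
    have h1 : r ^ K / (Nat.factorial K : ℝ) ≤ Real.exp r :=
      Real.pow_div_factorial_le_exp r (le_of_lt hrpos) K
    have h2 : (0:ℝ) < (Nat.factorial K : ℝ) := by positivity
    calc r ^ K = r ^ K / (Nat.factorial K : ℝ) * (Nat.factorial K : ℝ) := by field_simp
      _ ≤ Real.exp r * (Nat.factorial K : ℝ) := by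
          exact mul_le_mul_of_nonneg_right h1 (le_of_lt h2)
  have hfac_pos : (0:ℝ) < (Nat.factorial K : ℝ) := by positivity
  have step4 : (M : ℝ) * (lam ^ (K + 1) / (Nat.factorial K : ℝ)) ≤ 1 := by
    rw [mul_div_assoc', div_le_one hfac_pos]
    have hexp_pos : (0:ℝ) < Real.exp r := Real.exp_pos r
    nlinarith [step2, step3]
  have hfinal : r + (M : ℝ) * (lam ^ (K + 1) / (Nat.factorial K : ℝ)) ≤ 5 * L / ℓ := by
    have : 5 * L / ℓ = 5 * (L / ℓ) := by ring
    rw [this]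
    rw [hmd] at hr2
    linarith
  exact hfinal

lemma poisson_lintegral_sub_bound {Ω : Type} [MeasureSpace Ω]
    [IsProbabilityMeasure (ℙ : Measure Ω)]
    (lam : ℝ) (hlam : 0 < lam) (K : ℕ) (Y : Ω → ℕ) (hY : Measurable Y)
    (hpmf : ∀ k, (ℙ {ω | Y ω = k}).toReal = Real.exp (-lam) * lam ^ k / (Nat.factorial k)) :
    ∫⁻ ω, ((Y ω - K : ℕ) : ℝ≥0∞) ∂ℙ ≤ ENNReal.ofReal (lam ^ (K + 1) / (Nat.factorial K)) := by
  have hmap : ∫⁻ ω, ((Y ω - K : ℕ) : ℝ≥0∞) ∂ℙ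
      = ∑' k : ℕ, ((k - K : ℕ) : ℝ≥0∞) * ℙ {ω | Y ω = k} := by
    calc ∫⁻ ω, ((Y ω - K : ℕ) : ℝ≥0∞) ∂ℙ
        = ∫⁻ k, ((k - K : ℕ) : ℝ≥0∞) ∂(Measure.map Y ℙ) :=
          (lintegral_map (measurable_from_nat (f := fun k : ℕ => ((k - K : ℕ) : ℝ≥0∞))) hY).symm
      _ = ∑' k : ℕ, ((k - K : ℕ) : ℝ≥0∞) * (Measure.map Y ℙ) {k} := lintegral_countable' _
      _ = ∑' k : ℕ, ((k - K : ℕ) : ℝ≥0∞) * ℙ {ω | Y ω = k} := by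
          refine tsum_congr fun k => ?_
          rw [Measure.map_apply hY (measurableSet_singleton k)]
          rfl
  rw [hmap]
  have hterm : ∀ k : ℕ, ((k - K : ℕ) : ℝ≥0∞) * ℙ {ω | Y ω = k}
      = ENNReal.ofReal (((k - K : ℕ) : ℝ) * (Real.exp (-lam) * lam ^ k / (Nat.factorial k))) := by
    intro k
    rw [← hpmf k, ENNReal.ofReal_mul (by positivity),
      ENNReal.ofReal_toReal (measure_ne_top _ _), ENNReal.ofReal_natCast]
  simp_rw [hterm]
  rw [← ENNReal.ofReal_tsum_of_nonneg (fun k => by positivity)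
    (poisson_series_bound lam hlam K).1]
  exact ENNReal.ofReal_le_ofReal (poisson_series_bound lam hlam K).2


/-- The expected value of the maximum of `M` i.i.d. Poisson(λ) random variables is
`O(log M / log log M)`. -/
theorem poisson_max_expectation (lam : ℝ) (hlam : 0 < lam) :
    ∃ C : ℝ, 0 < C ∧ ∃ M₀ : ℕ, ∀ M : ℕ, M₀ ≤ M →
      ∀ (Ω : Type) (_ : MeasureSpace Ω), IsProbabilityMeasure (ℙ : Measure Ω) →
      ∀ X : Fin M → Ω → ℕ, (∀ i, Measurable (X i)) →
      iIndepFun X ℙ →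
      (∀ i : Fin M, ∀ k : ℕ,
        (ℙ {ω | X i ω = k}).toReal = Real.exp (-lam) * lam ^ k / (Nat.factorial k)) →
      ∫ ω, ((Finset.univ.sup (fun i : Fin M => X i ω) : ℕ) : ℝ) ∂ℙ
        ≤ C * Real.log M / Real.log (Real.log M) := by
  obtain ⟨M₀, hM₀⟩ : ∃ M₀ : ℕ, ∀ M : ℕ, M₀ ≤ M →
      12 + 8 * |Real.log lam| ≤ Real.log (Real.log M) := by
    have h : Filter.Tendsto (fun M : ℕ => Real.log (Real.log M)) Filter.atTop Filter.atTop :=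
      (Real.tendsto_log_atTop.comp Real.tendsto_log_atTop).comp tendsto_natCast_atTop_atTop
    exact Filter.eventually_atTop.mp (h.eventually_ge_atTop _)
  refine ⟨5, by norm_num, M₀, ?_⟩
  intro M hM Ω _ hprob X hXm _ hpmf
  haveI := hprob
  have harith := poisson_arith lam hlam M (hM₀ M hM)
  set K : ℕ := ⌈2 * Real.log M / Real.log (Real.log M)⌉₊ with hK
  set Z : Ω → ℕ := fun ω => Finset.univ.sup (fun i : Fin M => X i ω) with hZ
  have hZm : Measurable Z := by
    have h1 : Measurable (fun ω => (fun i : Fin M => X i ω)) := measurable_pi_lambda _ hXm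
    exact (measurable_of_countable (fun v : Fin M → ℕ => Finset.univ.sup v)).comp h1
  have hpt : ∀ ω, ENNReal.ofReal ((Z ω : ℕ) : ℝ)
      ≤ (K : ℝ≥0∞) + ∑ i : Fin M, ((X i ω - K : ℕ) : ℝ≥0∞) := by
    intro ω
    rw [ENNReal.ofReal_natCast]
    have hnat : Z ω ≤ K + ∑ i : Fin M, (X i ω - K) := by
      apply Finset.sup_le
      intro i _
      calc X i ω ≤ K + (X i ω - K) := le_add_tsub
        _ ≤ K + ∑ j : Fin M, (X j ω - K) :=
            Nat.add_le_add_left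
              (Finset.single_le_sum (f := fun j : Fin M => X j ω - K)
                (fun j _ => Nat.zero_le _) (Finset.mem_univ i)) K
    calc ((Z ω : ℕ) : ℝ≥0∞) ≤ ((K + ∑ i : Fin M, (X i ω - K) : ℕ) : ℝ≥0∞) := by
          exact_mod_cast hnat
      _ = (K : ℝ≥0∞) + ∑ i : Fin M, ((X i ω - K : ℕ) : ℝ≥0∞) := by push_cast; rfl
  have hmeas_i : ∀ i : Fin M, Measurable (fun ω => ((X i ω - K : ℕ) : ℝ≥0∞)) := fun i =>
    (measurable_from_nat (f := fun n : ℕ => ((n - K : ℕ) : ℝ≥0∞))).comp (hXm i)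
  set b : ℝ≥0∞ := ENNReal.ofReal (lam ^ (K + 1) / (Nat.factorial K)) with hb
  have hlint : ∫⁻ ω, ENNReal.ofReal ((Z ω : ℕ) : ℝ) ∂ℙ ≤ (K : ℝ≥0∞) + (M : ℝ≥0∞) * b := by
    calc ∫⁻ ω, ENNReal.ofReal ((Z ω : ℕ) : ℝ) ∂ℙ
        ≤ ∫⁻ ω, ((K : ℝ≥0∞) + ∑ i : Fin M, ((X i ω - K : ℕ) : ℝ≥0∞)) ∂ℙ := lintegral_mono hpt
      _ = (K : ℝ≥0∞) * ℙ Set.univ + ∑ i : Fin M, ∫⁻ ω, ((X i ω - K : ℕ) : ℝ≥0∞) ∂ℙ := by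
          rw [lintegral_add_left measurable_const, lintegral_const,
            lintegral_finset_sum _ (fun i _ => hmeas_i i)]
      _ ≤ (K : ℝ≥0∞) + ∑ _i : Fin M, b := by
          rw [measure_univ, mul_one]
          refine add_le_add_right (Finset.sum_le_sum fun i _ => ?_) _
          exact poisson_lintegral_sub_bound lam hlam K (X i) (hXm i) (hpmf i)
      _ = (K : ℝ≥0∞) + (M : ℝ≥0∞) * b := by
          rw [Finset.sum_const, Finset.card_univ, Fintype.card_fin, nsmul_eq_mul]
  have hint : ∫ ω, ((Z ω : ℕ) : ℝ) ∂ℙ = (∫⁻ ω, ENNReal.ofReal ((Z ω : ℕ) : ℝ) ∂ℙ).toReal :=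
    integral_eq_lintegral_of_nonneg_ae (Filter.Eventually.of_forall fun ω => Nat.cast_nonneg _)
      ((measurable_from_nat (f := fun n : ℕ => (n : ℝ))).comp hZm).aestronglyMeasurable
  have hfin : (K : ℝ≥0∞) + (M : ℝ≥0∞) * b ≠ ⊤ := by
    apply ENNReal.add_ne_top.mpr
    exact ⟨ENNReal.natCast_ne_top K, ENNReal.mul_ne_top (ENNReal.natCast_ne_top M)
      ENNReal.ofReal_ne_top⟩
  have htoReal : ((K : ℝ≥0∞) + (M : ℝ≥0∞) * b).toReal
      = (K : ℝ) + (M : ℝ) * (lam ^ (K + 1) / (Nat.factorial K)) := by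
    rw [ENNReal.toReal_add (ENNReal.natCast_ne_top K)
        (ENNReal.mul_ne_top (ENNReal.natCast_ne_top M) ENNReal.ofReal_ne_top),
      ENNReal.toReal_mul, ENNReal.toReal_ofReal (by positivity)]
    simp
  calc ∫ ω, ((Z ω : ℕ) : ℝ) ∂ℙ
      = (∫⁻ ω, ENNReal.ofReal ((Z ω : ℕ) : ℝ) ∂ℙ).toReal := hint
    _ ≤ ((K : ℝ≥0∞) + (M : ℝ≥0∞) * b).toReal := ENNReal.toReal_mono hfin hlint
    _ = (K : ℝ) + (M : ℝ) * (lam ^ (K + 1) / (Nat.factorial K)) := htoReal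
    _ ≤ 5 * Real.log M / Real.log (Real.log M) := harith
end

section
/- There exist a constant c > 0 and an integer K_0 such that for all K ≥ K_0 the following holds. Let V be the disjoint union of sets A_1, ..., A_K each of size K (so n = K²), let c(S) = max_{1≤k≤K} |S ∩ A_k|, and let p_i = 1/K for all i ∈ V. Then the independent expected value satisfies I(c,V,{1/K}) = E[max_{1≤k≤K} ζ_k], where ζ_1,...,ζ_K are i.i.d. Binomial(K,1/K), and the correlation gap satisfies L(c,V,{1/K}) / I(c,V,{1/K}) ≥ c·√n·log log n / log n. Hence the correlation gap of monotone subadditive functions can be Ω(√n·log log n / log n). -/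
open Finset

variable {W : Type*} [Fintype W] [DecidableEq W]

/-- Expected value of `f` under a distribution `α` on subsets of the ground set. -/
noncomputable def expVal (α : Finset W → ℝ) (f : Finset W → ℝ) : ℝ :=
  ∑ S : Finset W, α S * f S

/-- `α` is a probability distribution on subsets of the ground set with marginals `p`. -/
def IsDistWithMarginals (p : W → ℝ) (α : Finset W → ℝ) : Prop :=
  (∀ S, 0 ≤ α S) ∧ (∑ S : Finset W, α S = 1) ∧
    (∀ i : W, ∑ S ∈ Finset.univ.filter (fun S => i ∈ S), α S = p i)

/-- The worst-case expected value `L(f,V,{p_i})`: supremum of the expected value of `f`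
over all distributions with marginals `p`. -/
noncomputable def worstVal (p : W → ℝ) (f : Finset W → ℝ) : ℝ :=
  sSup {v | ∃ α, IsDistWithMarginals p α ∧ v = expVal α f}

/-- The expected value `I(f,V,{p_i})` of `f` when each element is included
independently with probability `p i`. -/
noncomputable def indepVal (p : W → ℝ) (f : Finset W → ℝ) : ℝ :=
  ∑ S : Finset W, (∏ i ∈ S, p i) * (∏ i ∈ Sᶜ, (1 - p i)) * f S

/-- `χ` is an `(η,β)`-cost-sharing scheme for `f`.  An ordering of a subset `S` of the ground
set is encoded as a duplicate-free list `l` with `l.toFinset = S`; the restriction of the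
ordering `l` to a subset `s` is `l.filter (· ∈ s)`.  The three conditions are:
`β`-budget balance, cross-monotonicity, and weak `η`-summability (the sum over `ℓ` of the
share of the `ℓ`-th element in the set of the first `ℓ` elements is at most `η·f(S)`). -/
def IsCostShare (f : Finset W → ℝ) (η β : ℝ) (χ : List W → W → ℝ) : Prop :=
  (∀ l : List W, l ≠ [] → l.Nodup →
      ∑ i ∈ l.toFinset, χ l i ≤ f l.toFinset ∧ f l.toFinset / β ≤ ∑ i ∈ l.toFinset, χ l i) ∧
  (∀ l : List W, l.Nodup → ∀ s : Finset W, s ⊆ l.toFinset → ∀ i ∈ s,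
      χ l i ≤ χ (l.filter (fun a => a ∈ s)) i) ∧
  (∀ l : List W, l ≠ [] → l.Nodup →
      ∑ ℓ : Fin l.length, χ (l.take (ℓ.1 + 1)) (l.get ℓ) ≤ η * f l.toFinset)

open MeasureTheory ProbabilityTheory



section CorrelationGapAux

open Finset MeasureTheory ProbabilityTheory

/-- binomial pmf value -/
noncomputable def cgB (K m : ℕ) : ℝ :=
  (K.choose m : ℝ) * (1 / (K:ℝ)) ^ m * (1 - 1/(K:ℝ)) ^ (K - m)

/-- binomial cdf: P(X < j) -/
noncomputable def cgQ (K j : ℕ) : ℝ := ∑ m ∈ Finset.range j, cgB K m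

/-- the common value of I -/
noncomputable def cgI (K : ℕ) : ℝ := ∑ j ∈ Finset.range K, (1 - (cgQ K (j+1))^K)

lemma one_sub_inv_nonneg {K : ℕ} (hK : 1 ≤ K) : (0:ℝ) ≤ 1 - 1/(K:ℝ) := by
  have : (1:ℝ) ≤ (K:ℝ) := by exact_mod_cast hK
  have h0 : (0:ℝ) < (K:ℝ) := by linarith
  have : 1/(K:ℝ) ≤ 1 := by rw [div_le_one h0]; exact this
  linarith

lemma cgB_nonneg {K : ℕ} (hK : 1 ≤ K) (m : ℕ) : 0 ≤ cgB K m := by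
  unfold cgB
  have := one_sub_inv_nonneg hK
  positivity

lemma cgB_eq_zero {K m : ℕ} (h : K < m) : cgB K m = 0 := by
  unfold cgB
  rw [Nat.choose_eq_zero_of_lt h]
  simp

lemma cgQ_nonneg {K : ℕ} (hK : 1 ≤ K) (j : ℕ) : 0 ≤ cgQ K j :=
  Finset.sum_nonneg fun m _ => cgB_nonneg hK m

lemma cgQ_mono {K : ℕ} (hK : 1 ≤ K) {i j : ℕ} (h : i ≤ j) : cgQ K i ≤ cgQ K j := by
  unfold cgQ
  exact Finset.sum_le_sum_of_subset_of_nonneg (Finset.range_subset_range.2 h)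
    (fun m _ _ => cgB_nonneg hK m)

lemma cgQ_succ_K {K : ℕ} (hK : 1 ≤ K) : cgQ K (K+1) = 1 := by
  have h0 : (0:ℝ) < (K:ℝ) := by exact_mod_cast hK
  have key := add_pow (1/(K:ℝ)) (1 - 1/(K:ℝ)) K
  have h1 : (1/(K:ℝ) + (1 - 1/(K:ℝ))) = 1 := by ring
  rw [h1, one_pow] at key
  unfold cgQ cgB
  refine Eq.trans ?_ key.symm
  apply Finset.sum_congr rfl
  intro m _
  ring

lemma cgQ_le_one {K : ℕ} (hK : 1 ≤ K) (j : ℕ) : cgQ K j ≤ 1 := by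
  rcases le_or_gt j (K+1) with h | h
  · rw [← cgQ_succ_K hK]; exact cgQ_mono hK h
  · have : cgQ K j = cgQ K (K+1) := by
      unfold cgQ
      rw [← Finset.sum_subset (Finset.range_subset_range.2 h.le)]
      intro m hm hm2
      simp only [Finset.mem_range, not_lt] at hm2
      exact cgB_eq_zero (by omega)
    rw [this, cgQ_succ_K hK]

/-- counting representation of a natural number bounded by K -/
lemma nat_count_repr {s K : ℕ} (h : s ≤ K) :
    (s:ℝ) = ∑ j ∈ Finset.range K, (if j+1 ≤ s then (1:ℝ) else 0) := by
  rw [← Finset.sum_filter]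
  have : Finset.filter (fun j => j+1 ≤ s) (Finset.range K) = Finset.range s := by
    ext j; simp only [Finset.mem_filter, Finset.mem_range]; omega
  rw [this]
  simp

lemma factorial_ge_pow {m n : ℕ} (hm : 1 ≤ m) (h : m ≤ n) : m ^ (n - m) ≤ Nat.factorial n := by
  induction n with
  | zero => omega
  | succ n ih =>
    rcases eq_or_lt_of_le h with rfl | h'
    · simpa using Nat.succ_le_of_lt (Nat.factorial_pos (n+1))
    · have hmn : m ≤ n := by omega
      have : m ^ (n + 1 - m) = m * m ^ (n - m) := by
        rw [← pow_succ']; congr 1; omega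
      rw [this, Nat.factorial_succ]
      exact Nat.mul_le_mul (by omega) (ih hmn)

variable {K : ℕ}

def rowEquiv (K : ℕ) : Finset (Fin K × Fin K) ≃ (Fin K → Finset (Fin K)) where
  toFun S := fun k => univ.filter (fun j => (k, j) ∈ S)
  invFun f := univ.filter (fun x => x.2 ∈ f x.1)
  left_inv S := by ext x; simp
  right_inv f := by funext k; ext j; simp

lemma filter_fst_eq (S : Finset (Fin K × Fin K)) (k : Fin K) :
    S.filter (fun x => x.1 = k) = (univ.filter (fun j => (k, j) ∈ S)).image (fun j => (k, j)) := by
  ext x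
  simp only [mem_filter, mem_image, mem_univ, true_and]
  constructor
  · rintro ⟨hx, rfl⟩; exact ⟨x.2, hx, rfl⟩
  · rintro ⟨j, hj, rfl⟩; exact ⟨hj, rfl⟩

lemma filter_fst_card (S : Finset (Fin K × Fin K)) (k : Fin K) :
    (S.filter (fun x => x.1 = k)).card = (rowEquiv K S k).card := by
  rw [filter_fst_eq]
  exact Finset.card_image_of_injective _ (fun a b h => by simpa using h)

lemma card_eq_sum_rows (S : Finset (Fin K × Fin K)) :
    S.card = ∑ k : Fin K, (rowEquiv K S k).card := by
  rw [Finset.card_eq_sum_card_fiberwise (f := Prod.fst) (t := univ) (fun x _ => mem_univ _)]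
  exact Finset.sum_congr rfl fun k _ => filter_fst_card S k

lemma row_card_le (f : Fin K → Finset (Fin K)) (k : Fin K) : (f k).card ≤ K := by
  simpa using Finset.card_le_univ (f k)

/-- sum over all subsets of `Fin K` of a function of the cardinality -/
lemma sum_card_classes (h : ℕ → ℝ) :
    ∑ t : Finset (Fin K), h t.card = ∑ m ∈ range (K+1), (K.choose m : ℝ) * h m := by
  rw [← Finset.sum_fiberwise_of_maps_to (g := Finset.card) (t := range (K+1))
    (fun t _ => mem_range.2 (Nat.lt_succ_of_le (by simpa using Finset.card_le_univ t)))]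
  apply Finset.sum_congr rfl
  intro m _
  have hset : (univ : Finset (Finset (Fin K))).filter (fun t => t.card = m)
      = Finset.powersetCard m univ := by
    ext t; simp [Finset.mem_powersetCard_univ]
  calc ∑ t ∈ (univ : Finset (Finset (Fin K))).filter (fun t => t.card = m), h t.card
      = ∑ t ∈ (univ : Finset (Finset (Fin K))).filter (fun t => t.card = m), h m := by
        apply Finset.sum_congr rfl; intro t ht; rw [(Finset.mem_filter.1 ht).2]
    _ = (K.choose m : ℝ) * h m := by
        rw [Finset.sum_const, hset, Finset.card_powersetCard, Finset.card_univ,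
          Fintype.card_fin, nsmul_eq_mul]

lemma indepVal_eq_cgI (hK : 1 ≤ K) (A : Fin K → Finset (Fin K × Fin K))
    (hA : ∀ k, A k = univ.filter (fun x : Fin K × Fin K => x.1 = k))
    (c : Finset (Fin K × Fin K) → ℝ)
    (hc : ∀ S, c S = ((univ.sup (fun k : Fin K => (S ∩ A k).card) : ℕ) : ℝ)) :
    indepVal (fun _ : Fin K × Fin K => 1/(K:ℝ)) c = cgI K := by
  set p1 : ℝ := 1/(K:ℝ) with hp1
  set q1 : ℝ := 1 - 1/(K:ℝ) with hq1
  set w : Finset (Fin K) → ℝ := fun t => p1 ^ t.card * q1 ^ (K - t.card) with hw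
  -- inter with A k is the row fiber
  have hinter : ∀ (S : Finset (Fin K × Fin K)) (k : Fin K),
      (S ∩ A k).card = (rowEquiv K S k).card := by
    intro S k
    rw [← filter_fst_card]
    congr 1
    ext x; simp [hA k, Finset.mem_filter, and_comm]
  -- rewrite each summand of indepVal through the row decomposition
  have hsummand : ∀ S : Finset (Fin K × Fin K),
      (∏ i ∈ S, p1) * (∏ i ∈ Sᶜ, (1 - p1)) * c S
        = (∏ k : Fin K, w (rowEquiv K S k)) *
            ((univ.sup (fun k => (rowEquiv K S k).card) : ℕ) : ℝ) := by
    intro S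
    have hcardc : Sᶜ.card = K * K - S.card := by
      rw [Finset.card_compl]
      simp [Fintype.card_prod]
    have hsum : ∑ k : Fin K, (rowEquiv K S k).card = S.card := (card_eq_sum_rows S).symm
    have hexp : K * K - S.card = ∑ k : Fin K, (K - (rowEquiv K S k).card) := by
      have h1 : ∑ k : Fin K, (K - (rowEquiv K S k).card) + ∑ k : Fin K, (rowEquiv K S k).card
          = K * K := by
        rw [← Finset.sum_add_distrib]
        have : ∀ k : Fin K, (K - (rowEquiv K S k).card) + (rowEquiv K S k).card = K := by
          intro k; have := row_card_le (rowEquiv K S) k; omega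
        rw [Finset.sum_congr rfl (fun k _ => this k)]
        simp [Finset.card_univ, mul_comm]
      omega
    rw [Finset.prod_const, Finset.prod_const, hcardc, hexp]
    have hcS : c S = ((univ.sup (fun k => (rowEquiv K S k).card) : ℕ) : ℝ) := by
      rw [hc S]
      congr 2
      exact funext fun k => hinter S k
    rw [hcS, hw]
    rw [← hsum, ← Finset.prod_pow_eq_pow_sum, ← Finset.prod_pow_eq_pow_sum,
      ← Finset.prod_mul_distrib]
  -- reindex over functions
  have hre : indepVal (fun _ : Fin K × Fin K => p1) c
      = ∑ f : Fin K → Finset (Fin K),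
          (∏ k, w (f k)) * ((univ.sup (fun k => (f k).card) : ℕ) : ℝ) := by
    unfold indepVal
    rw [Finset.sum_congr rfl (fun S _ => hsummand S)]
    exact (Equiv.sum_comp (rowEquiv K)
      (fun f => (∏ k, w (f k)) * ((univ.sup (fun k => (f k).card) : ℕ) : ℝ)))
  rw [hre]
  -- expand the sup as a sum of indicators
  have hsup_le : ∀ f : Fin K → Finset (Fin K), univ.sup (fun k => (f k).card) ≤ K :=
    fun f => Finset.sup_le fun k _ => row_card_le f k
  have hrepr : ∀ f : Fin K → Finset (Fin K),
      ((univ.sup (fun k => (f k).card) : ℕ) : ℝ)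
        = ∑ j ∈ range K, (if j+1 ≤ univ.sup (fun k => (f k).card) then (1:ℝ) else 0) :=
    fun f => nat_count_repr (hsup_le f)
  calc ∑ f : Fin K → Finset (Fin K),
          (∏ k, w (f k)) * ((univ.sup (fun k => (f k).card) : ℕ) : ℝ)
      = ∑ f : Fin K → Finset (Fin K), ∑ j ∈ range K,
          (∏ k, w (f k)) * (if j+1 ≤ univ.sup (fun k => (f k).card) then (1:ℝ) else 0) := by
        apply Finset.sum_congr rfl; intro f _
        rw [hrepr f, Finset.mul_sum]
    _ = ∑ j ∈ range K, ∑ f : Fin K → Finset (Fin K),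
          (∏ k, w (f k)) * (if j+1 ≤ univ.sup (fun k => (f k).card) then (1:ℝ) else 0) :=
        Finset.sum_comm
    _ = ∑ j ∈ range K, (1 - (cgQ K (j+1))^K) := by
        apply Finset.sum_congr rfl
        intro j hj
        have hjK : j < K := mem_range.1 hj
        -- indicator complement
        have hind : ∀ f : Fin K → Finset (Fin K),
            (if j+1 ≤ univ.sup (fun k => (f k).card) then (1:ℝ) else 0)
              = 1 - (if univ.sup (fun k => (f k).card) ≤ j then (1:ℝ) else 0) := by
          intro f
          rcases le_or_gt (j+1) (univ.sup (fun k => (f k).card)) with h | h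
          · rw [if_pos h, if_neg (by omega)]; ring
          · rw [if_neg (by omega), if_pos (by omega)]; ring
        have step : ∑ f : Fin K → Finset (Fin K),
            (∏ k, w (f k)) * (if j+1 ≤ univ.sup (fun k => (f k).card) then (1:ℝ) else 0)
            = (∑ f : Fin K → Finset (Fin K), ∏ k, w (f k))
              - ∑ f : Fin K → Finset (Fin K),
                  (∏ k, w (f k)) * (if univ.sup (fun k => (f k).card) ≤ j then (1:ℝ) else 0) := by
          rw [← Finset.sum_sub_distrib]
          apply Finset.sum_congr rfl
          intro f _
          rw [hind f]; ring
        rw [step]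
        -- total sum is (cgQ K (K+1))^K = 1
        have htot : ∑ f : Fin K → Finset (Fin K), ∏ k, w (f k) = (cgQ K (K+1))^K := by
          have := Finset.prod_univ_sum (fun _ : Fin K => (univ : Finset (Finset (Fin K))))
            (fun _ t => w t)
          rw [Fintype.piFinset_univ] at this
          rw [← this, Finset.prod_const, Finset.card_univ, Fintype.card_fin]
          congr 1
          have : ∑ t : Finset (Fin K), w t = ∑ m ∈ range (K+1), (K.choose m : ℝ)
              * (p1 ^ m * q1 ^ (K - m)) := sum_card_classes (fun m => p1 ^ m * q1 ^ (K-m))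
          rw [this]
          unfold cgQ cgB
          exact Finset.sum_congr rfl fun m _ => by rw [hp1, hq1]; ring
        -- constrained sum is (cgQ K (j+1))^K
        have hcon : ∑ f : Fin K → Finset (Fin K),
            (∏ k, w (f k)) * (if univ.sup (fun k => (f k).card) ≤ j then (1:ℝ) else 0)
            = (cgQ K (j+1))^K := by
          have hfac : ∀ f : Fin K → Finset (Fin K),
              (∏ k, w (f k)) * (if univ.sup (fun k => (f k).card) ≤ j then (1:ℝ) else 0)
              = ∏ k, (w (f k) * (if (f k).card ≤ j then (1:ℝ) else 0)) := by
            intro f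
            have hif : (if univ.sup (fun k => (f k).card) ≤ j then (1:ℝ) else 0)
                = ∏ k : Fin K, (if (f k).card ≤ j then (1:ℝ) else 0) := by
              rw [Finset.prod_boole]
              simp [Finset.sup_le_iff]
            rw [hif, ← Finset.prod_mul_distrib]
          rw [Finset.sum_congr rfl (fun f _ => hfac f)]
          have := Finset.prod_univ_sum (fun _ : Fin K => (univ : Finset (Finset (Fin K))))
            (fun _ t => w t * (if t.card ≤ j then (1:ℝ) else 0))
          rw [Fintype.piFinset_univ] at this
          rw [← this, Finset.prod_const, Finset.card_univ, Fintype.card_fin]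
          congr 1
          have h1 : ∑ t : Finset (Fin K), (w t * (if t.card ≤ j then (1:ℝ) else 0))
              = ∑ m ∈ range (K+1), (K.choose m : ℝ)
                  * (p1 ^ m * q1 ^ (K - m) * (if m ≤ j then (1:ℝ) else 0)) :=
            sum_card_classes (fun m => p1 ^ m * q1 ^ (K-m) * (if m ≤ j then (1:ℝ) else 0))
          rw [h1]
          have h2 : ∀ m ∈ range (K+1), (K.choose m : ℝ)
                  * (p1 ^ m * q1 ^ (K - m) * (if m ≤ j then (1:ℝ) else 0))
              = if m ≤ j then cgB K m else 0 := by
            intro m _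
            by_cases h : m ≤ j
            · rw [if_pos h, if_pos h]; unfold cgB; rw [hp1, hq1]; ring
            · rw [if_neg h, if_neg h]; ring
          rw [Finset.sum_congr rfl h2, ← Finset.sum_filter]
          have hfil : (range (K+1)).filter (fun x => x ≤ j) = range (j+1) := by
            ext x
            simp only [Finset.mem_filter, Finset.mem_range]
            omega
          rw [hfil]
          rfl
        rw [htot, hcon, cgQ_succ_K hK, one_pow]

lemma integral_sup_eq_cgI {K : ℕ} (hK : 1 ≤ K) (Ω : Type) [MeasureSpace Ω]
    (hP : IsProbabilityMeasure (ℙ : Measure Ω)) (ζ : Fin K → Ω → ℕ)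
    (hm : ∀ k, Measurable (ζ k)) (hi : iIndepFun ζ ℙ)
    (hd : ∀ (k : Fin K) (j : ℕ), (ℙ {ω | ζ k ω = j}).toReal
      = (K.choose j : ℝ) * (1/(K:ℝ))^j * (1 - 1/(K:ℝ))^(K-j)) :
    (∫ ω, ((univ.sup (fun k => ζ k ω) : ℕ) : ℝ) ∂ℙ) = cgI K := by
  classical
  -- events
  set E : ℕ → Set Ω := fun j => ⋃ k : Fin K, (ζ k) ⁻¹' (Set.Ici (j+1)) with hE
  have hEmeas : ∀ j, MeasurableSet (E j) :=
    fun j => MeasurableSet.iUnion (fun k => (hm k) measurableSet_Ici)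
  have hEset : ∀ j ω, ω ∈ E j ↔ j + 1 ≤ univ.sup (fun k => ζ k ω) := by
    intro j ω
    rw [Finset.le_sup_iff (Nat.succ_pos j)]
    simp [hE]
  -- values above K are null
  have hzero : ∀ (k : Fin K) (j : ℕ), K < j → ℙ {ω | ζ k ω = j} = 0 := by
    intro k j hj
    have h1 := hd k j
    rw [Nat.choose_eq_zero_of_lt hj] at h1
    simp only [Nat.cast_zero, zero_mul] at h1
    rcases (ENNReal.toReal_eq_zero_iff _).1 h1 with h | h
    · exact h
    · exact absurd h (measure_ne_top _ _)
  have hN : ℙ {ω | ∃ k, K < ζ k ω} = 0 := by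
    have : {ω | ∃ k, K < ζ k ω} = ⋃ k : Fin K, ⋃ j : ℕ, {ω | ζ k ω = K + 1 + j} := by
      ext ω
      simp only [Set.mem_setOf_eq, Set.mem_iUnion]
      constructor
      · rintro ⟨k, hk⟩; exact ⟨k, ζ k ω - K - 1, by omega⟩
      · rintro ⟨k, j, hj⟩; exact ⟨k, by omega⟩
    rw [this]
    exact measure_iUnion_null fun k => measure_iUnion_null fun j => hzero k _ (by omega)
  -- a.e. representation as a finite sum of indicators
  set g : Ω → ℝ := fun ω => ∑ j ∈ range K, (E j).indicator (fun _ => (1:ℝ)) ω with hg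
  have hae : (fun ω => ((univ.sup (fun k => ζ k ω) : ℕ) : ℝ)) =ᵐ[ℙ] g := by
    rw [Filter.eventuallyEq_iff_exists_mem]
    refine ⟨{ω | ∃ k, K < ζ k ω}ᶜ, ?_, ?_⟩
    · rw [MeasureTheory.mem_ae_iff, compl_compl]; exact hN
    · intro ω hω
      simp only [Set.mem_compl_iff, Set.mem_setOf_eq, not_exists, not_lt] at hω
      have hsle : univ.sup (fun k => ζ k ω) ≤ K := Finset.sup_le fun k _ => hω k
      show ((univ.sup (fun k => ζ k ω) : ℕ) : ℝ) = _
      rw [nat_count_repr hsle, hg]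
      apply Finset.sum_congr rfl
      intro j _
      rw [Set.indicator_apply]
      by_cases h : j + 1 ≤ univ.sup (fun k => ζ k ω)
      · rw [if_pos h, if_pos ((hEset j ω).2 h)]
      · rw [if_neg h, if_neg (fun hmem => h ((hEset j ω).1 hmem))]
  rw [integral_congr_ae hae, hg]
  rw [MeasureTheory.integral_finset_sum _
    (fun j _ => (MeasureTheory.integrable_const (1:ℝ)).indicator (hEmeas j))]
  -- compute each probability
  have hprob : ∀ j, (ℙ (E j)).toReal = 1 - (cgQ K (j+1))^K := by
    intro j
    have hcompl : (E j)ᶜ = ⋂ k : Fin K, (ζ k) ⁻¹' (Set.Iic j) := by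
      ext ω
      simp only [Set.mem_compl_iff, Set.mem_iInter, Set.mem_preimage, Set.mem_Iic]
      rw [hEset j ω]
      constructor
      · intro h k
        by_contra hk
        have h1 : ζ k ω ≤ univ.sup (fun k => ζ k ω) :=
          Finset.le_sup (f := fun k => ζ k ω) (mem_univ k)
        exact h (by omega)
      · intro h hle
        have h2 : univ.sup (fun k => ζ k ω) ≤ j :=
          Finset.sup_le (fun k _ => h k)
        omega
    have hind : ℙ (⋂ k : Fin K, (ζ k) ⁻¹' (Set.Iic j)) = ∏ k : Fin K, ℙ ((ζ k) ⁻¹' (Set.Iic j)) :=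
      hi.meas_iInter (fun k => ⟨Set.Iic j, measurableSet_Iic, rfl⟩)
    have hone : ∀ k : Fin K, (ℙ ((ζ k) ⁻¹' (Set.Iic j))).toReal = cgQ K (j+1) := by
      intro k
      have hsplit : (ζ k) ⁻¹' (Set.Iic j) = ⋃ m ∈ Finset.range (j+1), (ζ k) ⁻¹' {m} := by
        ext ω
        simp only [Set.mem_preimage, Set.mem_Iic, Set.mem_iUnion, Finset.mem_range,
          Set.mem_singleton_iff]
        constructor
        · intro h; exact ⟨ζ k ω, by omega, rfl⟩
        · rintro ⟨m, hm, hmv⟩; omega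
      have hdisj : ((Finset.range (j+1) : Finset ℕ) : Set ℕ).PairwiseDisjoint
          (fun m => (ζ k) ⁻¹' {m}) := by
        intro a _ b _ hab
        simp only [Function.onFun, Set.disjoint_left, Set.mem_preimage, Set.mem_singleton_iff]
        intro ω h1 h2
        exact hab (h1 ▸ h2 ▸ rfl)
      rw [hsplit, measure_biUnion_finset hdisj (fun m _ => (hm k) (measurableSet_singleton m))]
      rw [ENNReal.toReal_sum (fun m _ => measure_ne_top _ _)]
      unfold cgQ cgB
      exact Finset.sum_congr rfl fun m _ => hd k m
    have : ℙ (E j) = 1 - ℙ ((E j)ᶜ) := by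
      rw [← compl_compl (E j)] ; rw [prob_compl_eq_one_sub (hEmeas j).compl, compl_compl]
    rw [this, ENNReal.toReal_sub_of_le prob_le_one ENNReal.one_ne_top, ENNReal.toReal_one,
      hcompl, hind, ENNReal.toReal_prod]
    rw [Finset.prod_congr rfl (fun k _ => hone k), Finset.prod_const, Finset.card_univ,
      Fintype.card_fin]
  unfold cgI
  apply Finset.sum_congr rfl
  intro j _
  rw [MeasureTheory.integral_indicator_const (1:ℝ) (hEmeas j), smul_eq_mul, mul_one, measureReal_def, hprob j]

lemma cgI_ge_half {K : ℕ} (hK : 1 ≤ K) : 1/2 ≤ cgI K := by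
  have hterm0 : 1 - (cgQ K 1)^K ≤ cgI K := by
    apply Finset.single_le_sum (f := fun j => 1 - (cgQ K (j+1))^K)
    · intro j _
      have h1 : (cgQ K (j+1))^K ≤ 1 :=
        pow_le_one₀ (cgQ_nonneg hK _) (cgQ_le_one hK _)
      linarith
    · exact Finset.mem_range.2 hK
  have hQ1 : cgQ K 1 = (1 - 1/(K:ℝ))^K := by
    unfold cgQ cgB
    simp
  have hKpos : (0:ℝ) < K := by exact_mod_cast hK
  have hexp : (1 - 1/(K:ℝ)) ≤ Real.exp (-(1/(K:ℝ))) := by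
    have := Real.add_one_le_exp (-(1/(K:ℝ)))
    linarith
  have h2 : (cgQ K 1)^K ≤ Real.exp (-(1/(K:ℝ)))^(K*K) := by
    rw [hQ1, ← pow_mul]
    exact pow_le_pow_left₀ (one_sub_inv_nonneg hK) hexp (K*K)
  have h3 : Real.exp (-(1/(K:ℝ)))^(K*K) = Real.exp (-(K:ℝ)) := by
    rw [← Real.exp_nat_mul]
    congr 1
    push_cast
    field_simp
  have h4 : Real.exp (-(K:ℝ)) ≤ Real.exp (-1) := by
    apply Real.exp_le_exp.2
    have : (1:ℝ) ≤ K := by exact_mod_cast hK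
    linarith
  have h5 : Real.exp (-1) ≤ 1/2 := by
    rw [Real.exp_neg]
    rw [inv_le_comm₀ (Real.exp_pos 1) (by norm_num)]
    have := Real.add_one_le_exp (1:ℝ)
    linarith
  have : (cgQ K 1)^K ≤ 1/2 := by
    calc (cgQ K 1)^K ≤ Real.exp (-(1/(K:ℝ)))^(K*K) := h2
      _ = Real.exp (-(K:ℝ)) := h3
      _ ≤ Real.exp (-1) := h4
      _ ≤ 1/2 := h5
  linarith

lemma fact_mul_pow_le {a m : ℕ} (ha : 1 ≤ a) (h : a ≤ m) :
    Nat.factorial a * 2^(m-a) ≤ Nat.factorial m := by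
  induction m with
  | zero => omega
  | succ m ih =>
    rcases eq_or_lt_of_le h with rfl | h'
    · simp
    · have ham : a ≤ m := by omega
      have : a.factorial * 2^(m+1-a) = 2 * (a.factorial * 2^(m-a)) := by
        rw [show m+1-a = (m-a)+1 from by omega, pow_succ]
        ring
      rw [this, Nat.factorial_succ]
      exact Nat.mul_le_mul (by omega) (ih ham)

lemma geom_half_le_two (n : ℕ) : ∑ i ∈ range n, ((1:ℝ)/2)^i ≤ 2 := by
  induction n with
  | zero => simp
  | succ n ih =>
    have key : ∀ n : ℕ, ∑ i ∈ range n, ((1:ℝ)/2)^i = 2 - 2 * (1/2)^n := by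
      intro n
      induction n with
      | zero => simp
      | succ n ih2 => rw [Finset.sum_range_succ, ih2]; ring
    rw [key]
    have : (0:ℝ) ≤ (1/2)^(n+1) := by positivity
    linarith

lemma invfact_tail {a N : ℕ} (ha : 1 ≤ a) :
    ∑ m ∈ Finset.Ico a N, (1:ℝ)/(Nat.factorial m) ≤ 2/(Nat.factorial a) := by
  have hpos1 : (0:ℝ) < Nat.factorial a := by exact_mod_cast Nat.factorial_pos a
  have hbound : ∀ m ∈ Finset.Ico a N, (1:ℝ)/(Nat.factorial m)
      ≤ (1/(Nat.factorial a)) * ((1:ℝ)/2)^(m-a) := by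
    intro m hm
    have ham : a ≤ m := (Finset.mem_Ico.1 hm).1
    have hfr : (Nat.factorial a : ℝ) * 2^(m-a) ≤ (Nat.factorial m : ℝ) := by
      exact_mod_cast fact_mul_pow_le ha ham
    have h1 : (1:ℝ)/(Nat.factorial m) ≤ 1/((Nat.factorial a : ℝ) * 2^(m-a)) :=
      one_div_le_one_div_of_le (by positivity) hfr
    have h2 : (1:ℝ)/((Nat.factorial a : ℝ) * 2^(m-a))
        = (1/(Nat.factorial a)) * ((1:ℝ)/2)^(m-a) := by
      rw [one_div_pow, div_mul_div_comm, one_mul]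
    rw [h2] at h1
    exact h1
  calc ∑ m ∈ Finset.Ico a N, (1:ℝ)/(Nat.factorial m)
      ≤ ∑ m ∈ Finset.Ico a N, (1/(Nat.factorial a)) * ((1:ℝ)/2)^(m-a) :=
        Finset.sum_le_sum hbound
    _ = (1/(Nat.factorial a)) * ∑ m ∈ Finset.Ico a N, ((1:ℝ)/2)^(m-a) := by
        rw [Finset.mul_sum]
    _ ≤ (1/(Nat.factorial a)) * 2 := by
        apply mul_le_mul_of_nonneg_left _ (by positivity)
        rw [Finset.sum_Ico_eq_sum_range]
        calc ∑ i ∈ range (N - a), ((1:ℝ)/2)^(a + i - a)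
            = ∑ i ∈ range (N - a), ((1:ℝ)/2)^i := by
              apply Finset.sum_congr rfl
              intro i _
              congr 1
              omega
          _ ≤ 2 := geom_half_le_two _
    _ = 2/(Nat.factorial a) := by ring

lemma cgB_le_invfact {K : ℕ} (hK : 1 ≤ K) (m : ℕ) : cgB K m ≤ 1/(Nat.factorial m) := by
  have hKpos : (0:ℝ) < K := by exact_mod_cast hK
  have h1 : (K.choose m : ℝ) ≤ (K:ℝ)^m / (Nat.factorial m) := Nat.choose_le_pow_div m K
  have h2 : (1 - 1/(K:ℝ))^(K-m) ≤ 1 :=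
    pow_le_one₀ (one_sub_inv_nonneg hK) (by
      have : (1:ℝ) ≤ K := by exact_mod_cast hK
      have h3 : 0 < 1/(K:ℝ) := by positivity
      linarith)
  unfold cgB
  calc (K.choose m : ℝ) * (1/(K:ℝ))^m * (1 - 1/(K:ℝ))^(K-m)
      ≤ (K.choose m : ℝ) * (1/(K:ℝ))^m * 1 := by
        apply mul_le_mul_of_nonneg_left h2 (by positivity)
    _ = (K.choose m : ℝ) / (K:ℝ)^m := by
        rw [mul_one, one_div, inv_pow, div_eq_mul_inv]
    _ ≤ ((K:ℝ)^m / (Nat.factorial m)) / (K:ℝ)^m := by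
        apply div_le_div_of_nonneg_right h1 (by positivity)
    _ = 1/(Nat.factorial m) := by
        field_simp
  
lemma cgI_le_bound {K t : ℕ} (hK : 1 ≤ K) (ht : 1 ≤ t) (htK : t ≤ K) :
    cgI K ≤ t + 4*K/(Nat.factorial t) := by
  have hsplit : cgI K = ∑ j ∈ Finset.Ico 0 t, (1 - (cgQ K (j+1))^K)
      + ∑ j ∈ Finset.Ico t K, (1 - (cgQ K (j+1))^K) := by
    unfold cgI
    rw [Finset.range_eq_Ico, ← Finset.sum_Ico_consecutive _ (Nat.zero_le t) htK]
  have h1 : ∑ j ∈ Finset.Ico 0 t, (1 - (cgQ K (j+1))^K) ≤ t := by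
    calc ∑ j ∈ Finset.Ico 0 t, (1 - (cgQ K (j+1))^K)
        ≤ ∑ j ∈ Finset.Ico 0 t, (1:ℝ) := by
          apply Finset.sum_le_sum
          intro j _
          have : (0:ℝ) ≤ (cgQ K (j+1))^K := pow_nonneg (cgQ_nonneg hK _) K
          linarith
      _ = t := by simp
  have h2 : ∑ j ∈ Finset.Ico t K, (1 - (cgQ K (j+1))^K) ≤ 4*K/(Nat.factorial t) := by
    have hterm : ∀ j ∈ Finset.Ico t K, (1 - (cgQ K (j+1))^K) ≤ (K:ℝ) * (2/(Nat.factorial j)) := by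
      intro j hj
      have hjt : t ≤ j := (Finset.mem_Ico.1 hj).1
      have hjK : j < K := (Finset.mem_Ico.1 hj).2
      -- Bernoulli
      have hq0 : 0 ≤ cgQ K (j+1) := cgQ_nonneg hK _
      have hq1 : cgQ K (j+1) ≤ 1 := cgQ_le_one hK _
      have hbern : 1 + (K:ℝ) * (cgQ K (j+1) - 1) ≤ (cgQ K (j+1))^K := by
        have := one_add_mul_le_pow (a := cgQ K (j+1) - 1) (by linarith) K
        simpa using this
      -- tail sum
      have htail : 1 - cgQ K (j+1) = ∑ m ∈ Finset.Ico (j+1) (K+1), cgB K m := by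
        have hcons : cgQ K (j+1) + ∑ m ∈ Finset.Ico (j+1) (K+1), cgB K m = cgQ K (K+1) := by
          unfold cgQ
          simp only [Finset.range_eq_Ico]
          exact Finset.sum_Ico_consecutive _ (by omega) (by omega)
        rw [cgQ_succ_K hK] at hcons
        linarith
      have htail_le : 1 - cgQ K (j+1) ≤ 2/(Nat.factorial (j+1)) := by
        rw [htail]
        calc ∑ m ∈ Finset.Ico (j+1) (K+1), cgB K m
            ≤ ∑ m ∈ Finset.Ico (j+1) (K+1), (1:ℝ)/(Nat.factorial m) :=
              Finset.sum_le_sum (fun m _ => cgB_le_invfact hK m)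
          _ ≤ 2/(Nat.factorial (j+1)) := invfact_tail (by omega)
      have hff : (2:ℝ)/(Nat.factorial (j+1)) ≤ 2/(Nat.factorial j) := by
        apply div_le_div_of_nonneg_left (by norm_num)
          (by exact_mod_cast Nat.factorial_pos j)
        exact_mod_cast Nat.factorial_le (Nat.le_succ j)
      have hKpos : (0:ℝ) ≤ K := by positivity
      calc 1 - (cgQ K (j+1))^K ≤ (K:ℝ) * (1 - cgQ K (j+1)) := by linarith
        _ ≤ (K:ℝ) * (2/(Nat.factorial j)) := by
            apply mul_le_mul_of_nonneg_left _ hKpos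
            linarith
    calc ∑ j ∈ Finset.Ico t K, (1 - (cgQ K (j+1))^K)
        ≤ ∑ j ∈ Finset.Ico t K, (K:ℝ) * (2/(Nat.factorial j)) := Finset.sum_le_sum hterm
      _ = (2*K) * ∑ j ∈ Finset.Ico t K, (1:ℝ)/(Nat.factorial j) := by
          rw [Finset.mul_sum]
          apply Finset.sum_congr rfl
          intro j _
          ring
      _ ≤ (2*K) * (2/(Nat.factorial t)) := by
          apply mul_le_mul_of_nonneg_left (invfact_tail ht) (by positivity)
      _ = 4*K/(Nat.factorial t) := by ring
  linarith

section worst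
variable {K : ℕ}

lemma A_card (A : Fin K → Finset (Fin K × Fin K))
    (hA : ∀ k, A k = univ.filter (fun x : Fin K × Fin K => x.1 = k)) (k : Fin K) :
    (A k).card = K := by
  have himg : A k = univ.image (fun j : Fin K => (k, j)) := by
    rw [hA k]
    ext x
    simp only [mem_filter, mem_univ, true_and, mem_image]
    constructor
    · intro h; exact ⟨x.2, by rw [← h]⟩
    · rintro ⟨j, rfl⟩; rfl
  rw [himg, Finset.card_image_of_injective _ (fun a b h => by simpa using h)]
  simp

lemma c_le_K (A : Fin K → Finset (Fin K × Fin K))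
    (hA : ∀ k, A k = univ.filter (fun x : Fin K × Fin K => x.1 = k))
    (c : Finset (Fin K × Fin K) → ℝ)
    (hc : ∀ S, c S = ((univ.sup (fun k : Fin K => (S ∩ A k).card) : ℕ) : ℝ))
    (S : Finset (Fin K × Fin K)) : 0 ≤ c S ∧ c S ≤ K := by
  rw [hc S]
  constructor
  · positivity
  · have : univ.sup (fun k : Fin K => (S ∩ A k).card) ≤ K := by
      apply Finset.sup_le
      intro k _
      exact le_trans (Finset.card_le_card (Finset.inter_subset_right)) (le_of_eq (A_card A hA k))
    exact_mod_cast this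

lemma c_A_eq (A : Fin K → Finset (Fin K × Fin K))
    (hA : ∀ k, A k = univ.filter (fun x : Fin K × Fin K => x.1 = k))
    (c : Finset (Fin K × Fin K) → ℝ)
    (hc : ∀ S, c S = ((univ.sup (fun k : Fin K => (S ∩ A k).card) : ℕ) : ℝ))
    (k : Fin K) : c (A k) = K := by
  rw [hc (A k)]
  have hle : univ.sup (fun k' : Fin K => (A k ∩ A k').card) ≤ K := by
    apply Finset.sup_le
    intro k' _
    exact le_trans (Finset.card_le_card (Finset.inter_subset_right)) (le_of_eq (A_card A hA k'))
  have hge : K ≤ univ.sup (fun k' : Fin K => (A k ∩ A k').card) := by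
    have h1 : (A k ∩ A k).card = K := by rw [Finset.inter_self]; exact A_card A hA k
    calc K = (A k ∩ A k).card := h1.symm
      _ ≤ univ.sup (fun k' : Fin K => (A k ∩ A k').card) :=
          Finset.le_sup (f := fun k' : Fin K => (A k ∩ A k').card) (mem_univ k)
  have : univ.sup (fun k' : Fin K => (A k ∩ A k').card) = K := le_antisymm hle hge
  rw [this]

lemma worst_ge_K (hK : 1 ≤ K) (A : Fin K → Finset (Fin K × Fin K))
    (hA : ∀ k, A k = univ.filter (fun x : Fin K × Fin K => x.1 = k))
    (c : Finset (Fin K × Fin K) → ℝ)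
    (hc : ∀ S, c S = ((univ.sup (fun k : Fin K => (S ∩ A k).card) : ℕ) : ℝ)) :
    (K:ℝ) ≤ worstVal (fun _ : Fin K × Fin K => 1/(K:ℝ)) c := by
  classical
  have hKpos : (0:ℝ) < K := by exact_mod_cast hK
  set α : Finset (Fin K × Fin K) → ℝ :=
    fun S => ((univ.filter (fun k : Fin K => A k = S)).card : ℝ) / K with hα
  -- counting lemma
  have hcount : ∀ T : Finset (Finset (Fin K × Fin K)),
      ∑ S ∈ T, ((univ.filter (fun k : Fin K => A k = S)).card : ℝ)
        = ((univ.filter (fun k : Fin K => A k ∈ T)).card : ℝ) := by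
    intro T
    have h := Finset.card_eq_sum_card_fiberwise
      (f := A) (s := univ.filter (fun k : Fin K => A k ∈ T)) (t := T)
      (fun k hk => (Finset.mem_filter.1 hk).2)
    have h2 : ∀ S ∈ T, ((univ.filter (fun k : Fin K => A k ∈ T)).filter
        (fun k => A k = S)) = univ.filter (fun k : Fin K => A k = S) := by
      intro S hS
      ext k
      simp only [Finset.mem_filter, mem_univ, true_and]
      constructor
      · rintro ⟨_, h⟩; exact h
      · intro h; exact ⟨h ▸ hS, h⟩
    have h3 : ∑ b ∈ T, ((univ.filter (fun k : Fin K => A k ∈ T)).filter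
        (fun a => A a = b)).card = ∑ b ∈ T, (univ.filter (fun k : Fin K => A k = b)).card :=
      Finset.sum_congr rfl (fun S hS => by rw [h2 S hS])
    rw [h3] at h
    exact_mod_cast h.symm
  have hdist : IsDistWithMarginals (fun _ : Fin K × Fin K => 1/(K:ℝ)) α := by
    refine ⟨fun S => by positivity, ?_, ?_⟩
    · rw [hα]
      simp only
      rw [← Finset.sum_div, hcount univ]
      have : (univ.filter (fun k : Fin K => A k ∈ (univ : Finset (Finset (Fin K × Fin K)))))
          = univ := by
        apply Finset.filter_true_of_mem
        intro k _
        exact mem_univ _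
      rw [this]
      simp only [Finset.card_univ, Fintype.card_fin]
      field_simp
    · intro i
      rw [hα]
      simp only
      rw [← Finset.sum_div, hcount]
      have : (univ.filter (fun k : Fin K =>
          A k ∈ univ.filter (fun S : Finset (Fin K × Fin K) => i ∈ S))) = {i.1} := by
        ext k
        simp only [Finset.mem_filter, mem_univ, true_and, Finset.mem_singleton]
        constructor
        · intro hk
          rw [hA k] at hk
          exact ((Finset.mem_filter.1 hk).2).symm
        · rintro rfl
          rw [hA i.1]
          exact Finset.mem_filter.2 ⟨mem_univ _, rfl⟩
      rw [this]
      simp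
  have hexp : expVal α c = K := by
    unfold expVal
    rw [hα]
    simp only
    have hstep : ∀ S : Finset (Fin K × Fin K),
        ((univ.filter (fun k : Fin K => A k = S)).card : ℝ) / K * c S
          = (((univ.filter (fun k : Fin K => A k = S)).card : ℝ) * c S) / K := by
      intro S; ring
    rw [Finset.sum_congr rfl (fun S _ => hstep S), ← Finset.sum_div]
    have hnum : ∑ S : Finset (Fin K × Fin K),
        ((univ.filter (fun k : Fin K => A k = S)).card : ℝ) * c S
          = ∑ k : Fin K, c (A k) := by
      have h := Finset.sum_comp (s := (univ : Finset (Fin K))) c A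
      rw [h]
      rw [Finset.sum_subset (Finset.subset_univ (univ.image A))]
      · apply Finset.sum_congr rfl
        intro S _
        rw [nsmul_eq_mul]
      · intro S _ hS
        have : (univ.filter (fun k : Fin K => A k = S)).card = 0 := by
          rw [Finset.card_eq_zero]
          ext k
          simp only [Finset.mem_filter, mem_univ, true_and, Finset.notMem_empty, iff_false]
          intro h'
          exact hS (Finset.mem_image.2 ⟨k, mem_univ k, h'⟩)
        rw [this]
        simp
    rw [hnum, Finset.sum_congr rfl (fun k _ => c_A_eq A hA c hc k), Finset.sum_const]
    simp only [Finset.card_univ, Fintype.card_fin, nsmul_eq_mul]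
    field_simp
  have hbdd : BddAbove {v | ∃ α', IsDistWithMarginals (fun _ : Fin K × Fin K => 1/(K:ℝ)) α'
      ∧ v = expVal α' c} := by
    refine ⟨K, ?_⟩
    rintro v ⟨α', ⟨hpos, hsum, _⟩, rfl⟩
    unfold expVal
    calc ∑ S : Finset (Fin K × Fin K), α' S * c S
        ≤ ∑ S : Finset (Fin K × Fin K), α' S * K := by
          apply Finset.sum_le_sum
          intro S _
          exact mul_le_mul_of_nonneg_left (c_le_K A hA c hc S).2 (hpos S)
      _ = K := by rw [← Finset.sum_mul, hsum, one_mul]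
  have hmem : (K:ℝ) ∈ {v | ∃ α', IsDistWithMarginals (fun _ : Fin K × Fin K => 1/(K:ℝ)) α'
      ∧ v = expVal α' c} := ⟨α, hdist, hexp.symm⟩
  exact le_csSup hbdd hmem

end worst

lemma log_le_sqrt {x : ℝ} (hx : 256 ≤ x) : Real.log x ≤ Real.sqrt x := by
  have hx0 : (0:ℝ) < x := by linarith
  set s := Real.sqrt (Real.sqrt x) with hs
  have hs0 : 0 < s := Real.sqrt_pos.2 (Real.sqrt_pos.2 hx0)
  have h16 : (16:ℝ) ≤ Real.sqrt x := by
    calc (16:ℝ) = Real.sqrt 256 := by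
          rw [show (256:ℝ) = 16^2 by norm_num, Real.sqrt_sq (by norm_num)]
      _ ≤ Real.sqrt x := Real.sqrt_le_sqrt hx
  have hs4 : 4 ≤ s := by
    calc (4:ℝ) = Real.sqrt 16 := by
          rw [show (16:ℝ) = 4^2 by norm_num, Real.sqrt_sq (by norm_num)]
      _ ≤ s := Real.sqrt_le_sqrt h16
  have hlog : Real.log x = 4 * Real.log s := by
    rw [hs, Real.log_sqrt (Real.sqrt_nonneg x), Real.log_sqrt hx0.le]; ring
  have hsx : s^2 = Real.sqrt x := Real.sq_sqrt (Real.sqrt_nonneg x)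
  have hls : Real.log s ≤ s - 1 := Real.log_le_sub_one_of_pos hs0
  calc Real.log x = 4 * Real.log s := hlog
    _ ≤ 4 * (s - 1) := by linarith
    _ ≤ s * s := by nlinarith
    _ = Real.sqrt x := by rw [← hsx]; ring

lemma sqrt_ge_16 {x : ℝ} (hx : 256 ≤ x) : 16 ≤ Real.sqrt x := by
  calc (16:ℝ) = Real.sqrt 256 := by
        rw [show (256:ℝ) = 16^2 by norm_num, Real.sqrt_sq (by norm_num)]
    _ ≤ Real.sqrt x := Real.sqrt_le_sqrt hx

-- the asymptotic / arithmetic core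
lemma final_numeric {K : ℕ} (hK256 : 256 ≤ K) (hy256 : (256:ℝ) ≤ Real.log K) :
    ∃ t : ℕ, 1 ≤ t ∧ t ≤ K ∧ 4*K ≤ Nat.factorial t ∧
      ((t:ℝ)+1) * Real.log (2 * Real.log K) ≤ 800 * Real.log K := by
  have hK1 : 1 ≤ K := by omega
  have hKpos : (0:ℝ) < K := by exact_mod_cast hK1
  set y := Real.log (K:ℝ) with hy
  have hy0 : (0:ℝ) < y := by linarith
  have hly_sqrt : Real.log y ≤ Real.sqrt y := log_le_sqrt hy256
  have hsy : 16 ≤ Real.sqrt y := sqrt_ge_16 hy256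
  have hsy0 : 0 < Real.sqrt y := by linarith
  have hsqy : Real.sqrt y * Real.sqrt y = y := Real.mul_self_sqrt hy0.le
  have hly2 : 2 ≤ Real.log y := by
    have hexp2 : Real.exp 2 ≤ 9 := by
      rw [show (2:ℝ) = 1 + 1 by norm_num, Real.exp_add]
      nlinarith [Real.exp_one_lt_d9, Real.exp_pos 1]
    calc (2:ℝ) = Real.log (Real.exp 2) := (Real.log_exp 2).symm
      _ ≤ Real.log y := Real.log_le_log (Real.exp_pos 2) (by linarith)
  have hly0 : (0:ℝ) < Real.log y := by linarith
  -- y / log y ≥ √y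
  have hdiv : Real.sqrt y ≤ y / Real.log y := by
    rw [le_div_iff₀ hly0]
    calc Real.sqrt y * Real.log y ≤ Real.sqrt y * Real.sqrt y :=
          mul_le_mul_of_nonneg_left hly_sqrt hsy0.le
      _ = y := hsqy
  set t := ⌈8*y/Real.log y⌉₊ with htdef
  set m := ⌈Real.sqrt y⌉₊ with hmdef
  have htlb : 8*y/Real.log y ≤ (t:ℝ) := Nat.le_ceil _
  have htub : (t:ℝ) ≤ 8*y/Real.log y + 1 := (Nat.ceil_lt_add_one (by positivity)).le
  have hmlb : Real.sqrt y ≤ (m:ℝ) := Nat.le_ceil _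
  have hmub : (m:ℝ) ≤ Real.sqrt y + 1 := (Nat.ceil_lt_add_one (Real.sqrt_nonneg y)).le
  have h8 : 8 * Real.sqrt y ≤ 8*y/Real.log y := by
    have hre : 8*y/Real.log y = 8*(y/Real.log y) := by ring
    rw [hre]
    linarith
  have ht128 : (128:ℝ) ≤ (t:ℝ) := by
    have : (8:ℝ) * 16 ≤ 8 * Real.sqrt y := by linarith
    linarith
  have ht1 : 1 ≤ t := by exact_mod_cast (show (1:ℝ) ≤ (t:ℝ) by linarith)
  have hm1 : 1 ≤ m := by exact_mod_cast (show (1:ℝ) ≤ (m:ℝ) by linarith)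
  -- 2m ≤ t
  have h2m : 2*(m:ℝ) ≤ (t:ℝ) := by
    have : 2*(m:ℝ) ≤ 2*Real.sqrt y + 2 := by linarith
    have h2 : 2*Real.sqrt y + 2 ≤ 8*Real.sqrt y := by linarith
    linarith
  have hmt : m ≤ t := by
    have : (m:ℝ) ≤ (t:ℝ) := by linarith
    exact_mod_cast this
  refine ⟨t, ht1, ?_, ?_, ?_⟩
  · -- t ≤ K
    have hlK_sqrt : Real.log (K:ℝ) ≤ Real.sqrt (K:ℝ) := log_le_sqrt (by exact_mod_cast hK256)
    have hsK : 16 ≤ Real.sqrt (K:ℝ) := sqrt_ge_16 (by exact_mod_cast hK256)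
    have hsqK : Real.sqrt (K:ℝ) * Real.sqrt (K:ℝ) = (K:ℝ) := Real.mul_self_sqrt hKpos.le
    have h1 : 8*y/Real.log y ≤ 4*y := by
      rw [div_le_iff₀ hly0]
      nlinarith
    have h2 : (t:ℝ) ≤ 4*y + 1 := by linarith
    have h3 : 4*y + 1 ≤ (K:ℝ) := by nlinarith
    exact_mod_cast (show (t:ℝ) ≤ (K:ℝ) by linarith)
  · -- 4K ≤ t!
    have hcast : ((t - m : ℕ) : ℝ) = (t:ℝ) - (m:ℝ) := by
      push_cast [Nat.cast_sub hmt]; ring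
    have htm : 4*y/Real.log y ≤ ((t - m : ℕ) : ℝ) := by
      rw [hcast]
      have : (m:ℝ) ≤ (t:ℝ)/2 := by linarith
      have h4 : 4*y/Real.log y ≤ (t:ℝ)/2 := by
        have hre : 8*y/Real.log y = 2*(4*y/Real.log y) := by ring
        rw [hre] at htlb
        linarith
      linarith
    have hlogm : Real.log y / 2 ≤ Real.log (m:ℝ) := by
      have h1 : Real.log (Real.sqrt y) ≤ Real.log (m:ℝ) := Real.log_le_log hsy0 hmlb
      rw [Real.log_sqrt hy0.le] at h1
      linarith
    have hprod : 2*y ≤ ((t - m : ℕ) : ℝ) * Real.log (m:ℝ) := by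
      have hfac1 : 0 ≤ 4*y/Real.log y := by positivity
      have hfac2 : 0 ≤ Real.log y / 2 := by linarith
      calc 2*y = (4*y/Real.log y) * (Real.log y / 2) := by field_simp; ring
        _ ≤ ((t - m : ℕ) : ℝ) * Real.log (m:ℝ) := mul_le_mul htm hlogm hfac2 (by linarith)
    have hlog4K : Real.log ((4*K : ℕ) : ℝ) ≤ 2*y := by
      push_cast
      rw [Real.log_mul (by norm_num) hKpos.ne']
      have h4 : Real.log 4 ≤ 3 := by
        have := Real.log_le_sub_one_of_pos (show (0:ℝ) < 4 by norm_num)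
        linarith
      linarith
    have hmain : ((4*K : ℕ) : ℝ) ≤ ((m : ℕ) : ℝ)^((t - m : ℕ)) := by
      have hm0 : (0:ℝ) < (m:ℝ) := by exact_mod_cast hm1
      have hpow0 : (0:ℝ) < ((m:ℕ):ℝ)^((t-m:ℕ)) := by positivity
      have h4K0 : (0:ℝ) < ((4*K:ℕ):ℝ) := by
        have : 0 < 4*K := by omega
        exact_mod_cast this
      rw [← Real.log_le_log_iff h4K0 hpow0]
      rw [Real.log_pow]
      calc Real.log ((4*K:ℕ):ℝ) ≤ 2*y := hlog4K
        _ ≤ ((t - m : ℕ) : ℝ) * Real.log (m:ℝ) := hprod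
    have hnat : 4*K ≤ m^(t-m) := by exact_mod_cast hmain
    exact le_trans hnat (factorial_ge_pow hm1 hmt)
  · -- (t+1) * log(2y) ≤ 800 y
    have ha : Real.log (2*y) = Real.log 2 + Real.log y := Real.log_mul (by norm_num) hy0.ne'
    have hlog2 : Real.log 2 ≤ 1 := by
      have := Real.log_le_sub_one_of_pos (show (0:ℝ) < 2 by norm_num)
      linarith
    have haa : Real.log (2*y) ≤ 2*Real.log y := by rw [ha]; linarith
    have ha0 : 0 ≤ Real.log (2*y) := by
      rw [ha]
      have : 0 ≤ Real.log 2 := Real.log_nonneg (by norm_num)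
      linarith
    have ht9 : (t:ℝ) + 1 ≤ 9*y/Real.log y := by
      have h2' : 2 ≤ y/Real.log y := by
        have := hdiv
        linarith
      have : 8*y/Real.log y + 2 ≤ 9*y/Real.log y := by
        have hsplit : 9*y/Real.log y = 8*y/Real.log y + y/Real.log y := by ring
        linarith
      linarith
    calc ((t:ℝ)+1) * Real.log (2*y)
        ≤ (9*y/Real.log y) * (2*Real.log y) := by
          apply mul_le_mul ht9 haa ha0 (by positivity)
      _ = 18*y := by field_simp; ring
      _ ≤ 800*y := by linarith

end CorrelationGapAux

/-- Example 2 (correlation gap): there are `c₀ > 0` and `K₀` such that for all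
`K ≥ K₀`, for the instance on `V = A_1 ⊔ ⋯ ⊔ A_K` (each `|A_k| = K`, `n = K²`) with
`c(S) = max_k |S ∩ A_k|` and marginals `1/K`: the independent expected value equals
`E[max_k ζ_k]` for i.i.d. Binomial(K,1/K) variables `ζ_k`, and the correlation gap
satisfies `L/I ≥ c₀·√n·log log n / log n`. -/

theorem subadditive_correlation_gap_lower_bound :
    ∃ c₀ : ℝ, 0 < c₀ ∧ ∃ K₀ : ℕ, ∀ K : ℕ, K₀ ≤ K →
      ∀ (A : Fin K → Finset (Fin K × Fin K)),
        (∀ k : Fin K, A k = Finset.univ.filter (fun x : Fin K × Fin K => x.1 = k)) →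
      ∀ (c : Finset (Fin K × Fin K) → ℝ),
        (∀ S, c S = ((Finset.univ.sup (fun k : Fin K => (S ∩ A k).card) : ℕ) : ℝ)) →
      -- the independent expected value is E[max of K i.i.d. Binomial(K,1/K) variables]
      (∀ (Ω : Type) (_ : MeasureSpace Ω), IsProbabilityMeasure (ℙ : Measure Ω) →
        ∀ ζ : Fin K → Ω → ℕ, (∀ k, Measurable (ζ k)) →
        iIndepFun ζ ℙ →
        (∀ k : Fin K, ∀ j : ℕ,
          (ℙ {ω | ζ k ω = j}).toReal
            = (K.choose j : ℝ) * (1 / (K : ℝ)) ^ j * (1 - 1 / (K : ℝ)) ^ (K - j)) →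
        indepVal (fun _ : Fin K × Fin K => 1 / (K : ℝ)) c
          = ∫ ω, ((Finset.univ.sup (fun k : Fin K => ζ k ω) : ℕ) : ℝ) ∂ℙ)
      -- the correlation gap is at least c₀·√n·log log n / log n, where n = K²
      ∧ c₀ * Real.sqrt ((K : ℝ) ^ 2)
            * Real.log (Real.log ((K : ℝ) ^ 2)) / Real.log ((K : ℝ) ^ 2)
          ≤ worstVal (fun _ : Fin K × Fin K => 1 / (K : ℝ)) c
              / indepVal (fun _ : Fin K × Fin K => 1 / (K : ℝ)) c := by
  refine ⟨1/400, by norm_num, ?_⟩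
  have hev1 : ∀ᶠ (K:ℕ) in Filter.atTop, (256:ℝ) ≤ Real.log K :=
    (Real.tendsto_log_atTop.comp tendsto_natCast_atTop_atTop).eventually_ge_atTop 256
  have hev2 : ∀ᶠ (K:ℕ) in Filter.atTop, 256 ≤ K := Filter.eventually_ge_atTop 256
  obtain ⟨K₀, hK₀⟩ := Filter.eventually_atTop.1 (hev1.and hev2)
  refine ⟨K₀, fun K hKK A hA c hc => ?_⟩
  obtain ⟨hy256, hK256⟩ := hK₀ K hKK
  have hK1 : 1 ≤ K := by omega
  have hKpos : (0:ℝ) < K := by exact_mod_cast hK1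
  have hIeq := indepVal_eq_cgI hK1 A hA c hc
  constructor
  · intro Ω _ hP ζ hmeas hind hdist
    rw [hIeq, integral_sup_eq_cgI hK1 Ω hP ζ hmeas hind hdist]
  · obtain ⟨t, ht1, htK, hfact, hkey⟩ := final_numeric hK256 hy256
    have hIlow : 1/2 ≤ cgI K := cgI_ge_half hK1
    have hIpos : 0 < cgI K := by linarith
    have hfr : 4*(K:ℝ) ≤ (Nat.factorial t : ℝ) := by exact_mod_cast hfact
    have hfpos : (0:ℝ) < (Nat.factorial t : ℝ) := by exact_mod_cast Nat.factorial_pos t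
    have hIup : cgI K ≤ (t:ℝ) + 1 := by
      have h1 := cgI_le_bound hK1 ht1 htK
      have h2 : 4*(K:ℝ)/(Nat.factorial t) ≤ 1 := by
        rw [div_le_one hfpos]; exact hfr
      linarith
    have hL := worst_ge_K hK1 A hA c hc
    rw [hIeq]
    have hsqrt : Real.sqrt ((K:ℝ)^2) = K := Real.sqrt_sq hKpos.le
    have hy0 : (0:ℝ) < Real.log K := by linarith
    have hlogK2 : Real.log ((K:ℝ)^2) = 2*Real.log K := by
      rw [Real.log_pow]; push_cast; ring
    rw [hsqrt, hlogK2]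
    have ha0 : 0 ≤ Real.log (2*Real.log K) := Real.log_nonneg (by linarith)
    have htpos : (0:ℝ) < (t:ℝ) + 1 := by positivity
    have h1 : 1/400 * (K:ℝ) * Real.log (2*Real.log K) / (2*Real.log K)
        ≤ (K:ℝ)/((t:ℝ)+1) := by
      rw [div_le_div_iff₀ (by positivity) htpos]
      nlinarith [mul_le_mul_of_nonneg_left hkey hKpos.le]
    have h2 : (K:ℝ)/((t:ℝ)+1) ≤ (K:ℝ)/cgI K :=
      div_le_div_of_nonneg_left hKpos.le hIpos hIup
    have h3 : (K:ℝ)/cgI K ≤ worstVal (fun _ : Fin K × Fin K => 1/(K:ℝ)) c / cgI K :=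
      (div_le_div_iff_of_pos_right hIpos).2 hL
    exact le_trans (le_trans h1 h2) h3
end

section
/- Let V = {1,2,3,4,5,6} and define f : 2^V → ℝ by: f(∅) = 0; f(S) = 2 if |S| = 1; f(S) = 3 if |S ∩ {1,2,3}| = 1 and |S ∩ {4,5,6}| = 1; and f(S) = 4 if |S ∩ {1,2,3}| ≥ 2 or |S ∩ {4,5,6}| ≥ 2. Then: (a) f is non-decreasing and submodular; (b) for every partition of V into 3 (possibly empty) parts A_1, A_2, A_3, one has f(A_1) + f(A_2) + f(A_3) ≤ 11, and this bound 11 is attained; (c) there is a feasible fractional solution to the LP relaxation — namely α_{{1,2}} = α_{{2,3}} = α_{{1,3}} = α_{{4,5}} = α_{{5,6}} = α_{{4,6}} = 0.5, satisfying α_S ≥ 0, Σ_{S∋i} α_S = 1 for all i ∈ V, and Σ_S α_S = 3 — with objective value Σ_S α_S f(S) = 12. Hence the welfare-maximization integer program with 3 players with identical submodular valuation f has integrality gap at most 11/12, disproving the conjecture that such instances have zero integrality gap. -/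
open Finset

set_option maxRecDepth 40000

/-- Explicit ℕ-valued model of the valuation `f`. -/
def Fm (S : Finset (Fin 6)) : ℕ :=
  if 2 ≤ (S ∩ ({0, 1, 2} : Finset (Fin 6))).card
      ∨ 2 ≤ (S ∩ ({3, 4, 5} : Finset (Fin 6))).card then 4
  else if (S ∩ ({0, 1, 2} : Finset (Fin 6))).card = 1
      ∧ (S ∩ ({3, 4, 5} : Finset (Fin 6))).card = 1 then 3
  else if S.card = 1 then 2 else 0

/-- Explicit ℕ-valued model of `2 • α`. -/
def Gm2 (S : Finset (Fin 6)) : ℕ :=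
  if S = {0, 1} ∨ S = {1, 2} ∨ S = {0, 2}
      ∨ S = {3, 4} ∨ S = {4, 5} ∨ S = {3, 5} then 1 else 0

lemma Fm_mono : ∀ S T : Finset (Fin 6), S ⊆ T → Fm S ≤ Fm T := by decide

lemma Fm_submod : ∀ T S : Finset (Fin 6), T ⊆ S → ∀ i : Fin 6,
    Fm (insert i S) + Fm T ≤ Fm (insert i T) + Fm S := by decide

lemma Fm_le : ∀ S : Finset (Fin 6), Fm S ≤ 4 := by decide

lemma Fm_four_or : ∀ S : Finset (Fin 6), Fm S = 4 ∨ Fm S ≤ 3 := by decide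

lemma Fm_eq_four : ∀ S : Finset (Fin 6), Fm S = 4 →
    2 ≤ (S ∩ ({0, 1, 2} : Finset (Fin 6))).card
      ∨ 2 ≤ (S ∩ ({3, 4, 5} : Finset (Fin 6))).card := by decide

lemma Gm2_marginal : ∀ i : Fin 6,
    ∑ S ∈ Finset.univ.filter (fun S : Finset (Fin 6) => i ∈ S), Gm2 S = 2 := by decide

lemma Gm2_total : ∑ S : Finset (Fin 6), Gm2 S = 6 := by decide

lemma Gm2_obj : ∑ S : Finset (Fin 6), Gm2 S * Fm S = 24 := by decide

/-- The counterexample to Bikhchandani's conjecture: on `V = {1,…,6}` (encoded as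
`Fin 6`, with `A = {0,1,2}` and `B = {3,4,5}` playing the roles of `{1,2,3}` and
`{4,5,6}`), the function `f` with `f(∅)=0`, `f(S)=2` for `|S|=1`, `f(S)=3` when
`|S∩A|=1` and `|S∩B|=1`, and `f(S)=4` when `|S∩A|≥2` or `|S∩B|≥2` is non-decreasing and
submodular; every partition into 3 parts has total value at most 11, and 11 is attained;
while the fractional solution `α` assigning `1/2` to each of `{0,1},{1,2},{0,2},{3,4},
{4,5},{3,5}` is feasible for the LP relaxation (nonnegative, marginals 1, total mass 3)
with objective value 12.  Hence the integrality gap is at most `11/12`. -/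
theorem welfare_integrality_gap_example
    (f : Finset (Fin 6) → ℝ)
    (hf0 : f ∅ = 0)
    (hf1 : ∀ S : Finset (Fin 6), S.card = 1 → f S = 2)
    (hf2 : ∀ S : Finset (Fin 6),
      (S ∩ ({0, 1, 2} : Finset (Fin 6))).card = 1 →
      (S ∩ ({3, 4, 5} : Finset (Fin 6))).card = 1 → f S = 3)
    (hf3 : ∀ S : Finset (Fin 6),
      (2 ≤ (S ∩ ({0, 1, 2} : Finset (Fin 6))).card
        ∨ 2 ≤ (S ∩ ({3, 4, 5} : Finset (Fin 6))).card) → f S = 4)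
    (α : Finset (Fin 6) → ℝ)
    (hα : ∀ S : Finset (Fin 6),
      α S = if S = {0, 1} ∨ S = {1, 2} ∨ S = {0, 2}
              ∨ S = {3, 4} ∨ S = {4, 5} ∨ S = {3, 5} then 1 / 2 else 0) :
    -- (a) f is non-decreasing and submodular
    (∀ S T : Finset (Fin 6), S ⊆ T → f S ≤ f T)
    ∧ (∀ T S : Finset (Fin 6), T ⊆ S → ∀ i : Fin 6,
        f (insert i S) - f S ≤ f (insert i T) - f T)
    -- (b) every partition into 3 (possibly empty) parts has value at most 11, attained
    ∧ (∀ P : Fin 3 → Finset (Fin 6),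
        (∀ k l : Fin 3, k ≠ l → Disjoint (P k) (P l)) →
        Finset.univ.biUnion P = Finset.univ →
        ∑ k : Fin 3, f (P k) ≤ 11)
    ∧ (∃ P : Fin 3 → Finset (Fin 6),
        (∀ k l : Fin 3, k ≠ l → Disjoint (P k) (P l))
        ∧ Finset.univ.biUnion P = Finset.univ
        ∧ ∑ k : Fin 3, f (P k) = 11)
    -- (c) α is feasible for the LP relaxation with objective value 12
    ∧ (∀ S : Finset (Fin 6), 0 ≤ α S)
    ∧ (∀ i : Fin 6, ∑ S ∈ Finset.univ.filter (fun S : Finset (Fin 6) => i ∈ S), α S = 1)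
    ∧ (∑ S : Finset (Fin 6), α S = 3)
    ∧ (∑ S : Finset (Fin 6), α S * f S = 12) := by
  -- f agrees with the explicit model
  have key : ∀ S : Finset (Fin 6), f S = (Fm S : ℝ) := by
    intro S
    have hAB : S.card = (S ∩ ({0, 1, 2} : Finset (Fin 6))).card
        + (S ∩ ({3, 4, 5} : Finset (Fin 6))).card := by
      rw [← Finset.card_union_of_disjoint
        ((show Disjoint ({0, 1, 2} : Finset (Fin 6)) {3, 4, 5} by decide).mono
          inter_subset_right inter_subset_right),
        ← Finset.inter_union_distrib_left,
        show ({0, 1, 2} ∪ {3, 4, 5} : Finset (Fin 6)) = univ from by decide, inter_univ]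
    by_cases h1 : 2 ≤ (S ∩ ({0, 1, 2} : Finset (Fin 6))).card
        ∨ 2 ≤ (S ∩ ({3, 4, 5} : Finset (Fin 6))).card
    · rw [hf3 S h1]; simp only [Fm, if_pos h1]; norm_num
    · by_cases h2 : (S ∩ ({0, 1, 2} : Finset (Fin 6))).card = 1
          ∧ (S ∩ ({3, 4, 5} : Finset (Fin 6))).card = 1
      · rw [hf2 S h2.1 h2.2]; simp only [Fm, if_neg h1, if_pos h2]; norm_num
      · by_cases h4 : S.card = 1
        · rw [hf1 S h4]; simp only [Fm, if_neg h1, if_neg h2, if_pos h4]; norm_num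
        · have h0 : S = ∅ := by
            push_neg at h1 h2
            refine card_eq_zero.mp ?_
            rcases Nat.lt_or_ge (S ∩ ({0, 1, 2} : Finset (Fin 6))).card 1 with h | h
            · omega
            · omega
          rw [h0, hf0, show Fm ∅ = 0 from by decide]; norm_num
  have hαG : ∀ S : Finset (Fin 6), α S = (Gm2 S : ℝ) / 2 := by
    intro S
    rw [hα]; simp only [Gm2]; split_ifs <;> norm_num
  refine ⟨?_, ?_, ?_, ?_, ?_, ?_, ?_, ?_⟩
  · -- monotone
    intro S T h
    rw [key, key]
    exact_mod_cast Fm_mono S T h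
  · -- submodular
    intro T S hTS i
    have h := Fm_submod T S hTS i
    rw [key, key, key, key]
    have h' : (Fm (insert i S) : ℝ) + Fm T ≤ (Fm (insert i T) : ℝ) + Fm S := by
      exact_mod_cast h
    linarith
  · -- upper bound 11
    intro P hdisj _
    have hAcard : ∀ C : Finset (Fin 6),
        (P 0 ∩ C).card + (P 1 ∩ C).card + (P 2 ∩ C).card ≤ C.card := by
      intro C
      have d01 : Disjoint (P 0 ∩ C) (P 1 ∩ C) :=
        (hdisj 0 1 (by decide)).mono inter_subset_left inter_subset_left
      have d02 : Disjoint (P 0 ∩ C ∪ P 1 ∩ C) (P 2 ∩ C) := by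
        refine Finset.disjoint_union_left.mpr ⟨?_, ?_⟩
        · exact (hdisj 0 2 (by decide)).mono inter_subset_left inter_subset_left
        · exact (hdisj 1 2 (by decide)).mono inter_subset_left inter_subset_left
      calc (P 0 ∩ C).card + (P 1 ∩ C).card + (P 2 ∩ C).card
          = ((P 0 ∩ C ∪ P 1 ∩ C) ∪ (P 2 ∩ C)).card := by
            rw [Finset.card_union_of_disjoint d02, Finset.card_union_of_disjoint d01]
        _ ≤ C.card := Finset.card_le_card (by
            refine Finset.union_subset (Finset.union_subset ?_ ?_) ?_ <;>
              exact inter_subset_right)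
    have hA := hAcard ({0, 1, 2} : Finset (Fin 6))
    have hB := hAcard ({3, 4, 5} : Finset (Fin 6))
    rw [show (({0, 1, 2} : Finset (Fin 6))).card = 3 from by decide] at hA
    rw [show (({3, 4, 5} : Finset (Fin 6))).card = 3 from by decide] at hB
    have hk : ∀ k : Fin 3, Fm (P k) ≤ 3
        ∨ 2 ≤ (P k ∩ ({0, 1, 2} : Finset (Fin 6))).card
        ∨ 2 ≤ (P k ∩ ({3, 4, 5} : Finset (Fin 6))).card := by
      intro k
      rcases Fm_four_or (P k) with h | h
      · exact Or.inr (Fm_eq_four _ h)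
      · exact Or.inl h
    have hN : Fm (P 0) + Fm (P 1) + Fm (P 2) ≤ 11 := by
      have l0 := Fm_le (P 0); have l1 := Fm_le (P 1); have l2 := Fm_le (P 2)
      rcases hk 0 with h0 | h0 | h0 <;> rcases hk 1 with h1 | h1 | h1 <;>
        rcases hk 2 with h2 | h2 | h2 <;> omega
    rw [Fin.sum_univ_three, key, key, key]
    exact_mod_cast hN
  · -- attained
    refine ⟨![{0, 1}, {3, 4}, {2, 5}], by decide, by decide, ?_⟩
    rw [Fin.sum_univ_three]
    show f {0, 1} + f {3, 4} + f {2, 5} = 11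
    rw [key, key, key, show Fm {0, 1} = 4 from by decide,
      show Fm {3, 4} = 4 from by decide, show Fm {2, 5} = 3 from by decide]
    norm_num
  · -- nonneg
    intro S
    rw [hαG]
    positivity
  · -- marginals
    intro i
    rw [Finset.sum_congr rfl fun S _ => hαG S, ← Finset.sum_div, ← Nat.cast_sum,
      Gm2_marginal i]
    norm_num
  · -- total mass
    rw [Finset.sum_congr rfl fun S _ => hαG S, ← Finset.sum_div, ← Nat.cast_sum, Gm2_total]
    norm_num
  · -- objective
    have : ∀ S : Finset (Fin 6), α S * f S = ((Gm2 S * Fm S : ℕ) : ℝ) / 2 := by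
      intro S
      rw [hαG, key]
      push_cast
      ring
    rw [Finset.sum_congr rfl fun S _ => this S, ← Finset.sum_div, ← Nat.cast_sum, Gm2_obj]
    norm_num
end
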